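/- Let s₁, s₂, r, ω ∈ ℝ and y ∈ ℝ³ with ω ≠ 0, y₃ > 0, and y ≠ R, where S = (s₁,s₂,0) and R = (0,0,r). Set A = ‖y−S‖, B = ‖y−R‖, and suppose (y−S)/A + (y−R)/B ≠ 0. Then the determinant of the 3×3 matrix with rows (−((y₂−s₂)²+y₃²)ω/A³, (y₁−s₁)(y₂−s₂)ω/A³, (y₁−s₁)/A + y₁/B), ((y₁−s₁)(y₂−s₂)ω/A³, −((y₁−s₁)²+y₃²)ω/A³, (y₂−s₂)/A + y₂/B), (y₃(y₁−s₁)ω/A³, (y₂−s₂)y₃ω/A³, y₃/A + (y₃−r)/B) is nonzero. -/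

import Mathlib

set_option maxHeartbeats 1000000 in
/-- Nonvanishing of the determinant of the Jacobian `Dη/D(s₁,s₂,ω)` of the right
projection `π_R` for the dense-array borehole geometry (constant background sound speed),
under the no-scattering-over-π condition `(y−S)/A + (y−R)/B ≠ 0`. -/
theorem denseArray_det_dpiR_ne_zero
    (s₁ s₂ r ω : ℝ) (hω : ω ≠ 0) (y S R : EuclideanSpace ℝ (Fin 3))
    (hS : S = ![s₁, s₂, 0]) (hR : R = ![0, 0, r])
    (hy3 : y 2 > 0) (hyR : y ≠ R)
    (A B : ℝ) (hA : A = ‖y - S‖) (hB : B = ‖y - R‖)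
    (hnoπ : A⁻¹ • (y - S) + B⁻¹ • (y - R) ≠ 0) :
    (!![-((y 1 - s₂) ^ 2 + (y 2) ^ 2) * ω / A ^ 3,
        (y 0 - s₁) * (y 1 - s₂) * ω / A ^ 3,
        (y 0 - s₁) / A + y 0 / B;
        (y 0 - s₁) * (y 1 - s₂) * ω / A ^ 3,
        -((y 0 - s₁) ^ 2 + (y 2) ^ 2) * ω / A ^ 3,
        (y 1 - s₂) / A + y 1 / B;
        y 2 * (y 0 - s₁) * ω / A ^ 3,
        (y 1 - s₂) * y 2 * ω / A ^ 3,
        y 2 / A + (y 2 - r) / B]).det ≠ 0 := by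
  set a := y 0 - s₁ with ha
  set b := y 1 - s₂ with hb
  set c := y 2 with hc
  -- y - S is nonzero since its third coordinate is c > 0
  have hyS : y - S ≠ 0 := by
    intro h
    have : (y - S) 2 = 0 := by rw [h]; rfl
    rw [show (y - S) 2 = y 2 - S 2 from rfl, hS] at this
    simp at this
    linarith [hy3, this]
  have hApos : 0 < A := by rw [hA]; exact norm_pos_iff.mpr hyS
  have hBpos : 0 < B := by
    rw [hB]; exact norm_pos_iff.mpr (sub_ne_zero.mpr hyR)
  have hA2 : A ^ 2 = a ^ 2 + b ^ 2 + c ^ 2 := by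
    rw [hA, ← real_inner_self_eq_norm_sq]
    rw [PiLp.inner_apply]
    rw [Fin.sum_univ_three]
    simp [hS, ha, hb, hc, sq]
  set I : ℝ := a * y 0 + b * y 1 + c * (c - r) with hI
  have hinner : (inner ℝ (y - S) (y - R) : ℝ) = I := by
    rw [PiLp.inner_apply, Fin.sum_univ_three]
    simp [hS, hR, ha, hb, hc, hI, mul_comm]
  -- From hnoπ: A*B + I > 0
  have hnormS : ‖y - S‖ = A := hA.symm
  have hnormR : ‖y - R‖ = B := hB.symm
  have hkey : 0 < A * B + I := by
    have hpos : (0:ℝ) < ‖A⁻¹ • (y - S) + B⁻¹ • (y - R)‖ ^ 2 := by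
      have := norm_pos_iff.mpr hnoπ
      positivity
    rw [norm_add_sq_real] at hpos
    rw [norm_smul, norm_smul, real_inner_smul_left, real_inner_smul_right,
      hinner, hnormS, hnormR] at hpos
    rw [Real.norm_eq_abs, Real.norm_eq_abs, abs_of_pos (inv_pos.mpr hApos),
      abs_of_pos (inv_pos.mpr hBpos)] at hpos
    have h1 : A⁻¹ * A = 1 := inv_mul_cancel₀ hApos.ne'
    have h2 : B⁻¹ * B = 1 := inv_mul_cancel₀ hBpos.ne'
    have hABpos : 0 < A * B := mul_pos hApos hBpos
    rw [h1, h2] at hpos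
    -- hpos : 0 < 1^2 + 2*(A⁻¹ * (B⁻¹ * I)) + 1^2
    have : 0 < 2 + 2 * (A * B)⁻¹ * I := by
      rw [mul_inv]
      nlinarith [hpos]
    have h4 := mul_pos hABpos this
    have h5 : (A*B) * (2 + 2*(A*B)⁻¹*I) = 2*(A*B) + 2*I := by
      field_simp
    rw [h5] at h4
    linarith
  have hAne : A ≠ 0 := hApos.ne'
  have hBne : B ≠ 0 := hBpos.ne'
  have hdet : (!![-(b ^ 2 + c ^ 2) * ω / A ^ 3,
        a * b * ω / A ^ 3, a / A + y 0 / B;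
        a * b * ω / A ^ 3, -(a ^ 2 + c ^ 2) * ω / A ^ 3, b / A + y 1 / B;
        c * a * ω / A ^ 3, b * c * ω / A ^ 3, c / A + (c - r) / B]).det
      = ω ^ 2 * c * (A * B + I) / (A ^ 4 * B) := by
    rw [Matrix.det_fin_three]
    simp only [Matrix.cons_val', Matrix.cons_val_zero, Matrix.cons_val_one,
      Matrix.head_cons, Matrix.empty_val', Matrix.cons_val_fin_one,
      Matrix.head_fin_const, Matrix.cons_val_two, Matrix.tail_cons, Matrix.of_apply]
    rw [show ω ^ 2 * c * (A * B + I) / (A ^ 4 * B)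
        = ω ^ 2 * c * ((a^2+b^2+c^2) * ((a^2+b^2+c^2) * B + A * I)) / (A ^ 7 * B) by
      rw [← hA2]; field_simp]
    field_simp
    ring
  rw [hdet]
  have : ω ^ 2 * c * (A * B + I) > 0 := by positivity
  positivity
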